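/- The even moments of the semicircle distribution are the Catalan numbers: for every natural number k, ∫_{-2}^{2} x^{2k} · (1/(2π))√(4 - x²) dx = C_k = (1/(k+1))·binom(2k, k), and all odd moments ∫_{-2}^{2} x^{2k+1} · (1/(2π))√(4 - x²) dx vanish. -/

import Mathlib

open MeasureTheory Real intervalIntegral

lemma integral_cos_pow_even' (k : ℕ) :
    (∫ x in (0:ℝ)..π, Real.cos x ^ (2 * k)) =
      π * ∏ i ∈ Finset.range k, (2 * (i : ℝ) + 1) / (2 * i + 2) := by
  induction k with
  | zero => simp
  | succ k ih =>
    rw [Finset.prod_range_succ_comm, mul_left_comm, ← ih, Nat.mul_succ, integral_cos_pow]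
    norm_cast
    simp [Real.sin_pi]

lemma prod_eq_centralBinom (k : ℕ) :
    (4 : ℝ) ^ k * ∏ i ∈ Finset.range k, (2 * (i : ℝ) + 1) / (2 * i + 2) =
      (Nat.centralBinom k : ℝ) := by
  induction k with
  | zero => simp [Nat.centralBinom]
  | succ k ih =>
    have h := Nat.succ_mul_centralBinom_succ k
    have h' : ((k:ℝ) + 1) * (Nat.centralBinom (k+1) : ℝ)
        = 2 * (2 * k + 1) * (Nat.centralBinom k : ℝ) := by exact_mod_cast h
    rw [Finset.prod_range_succ, pow_succ]
    have hk1 : ((k:ℝ) + 1) ≠ 0 := by positivity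
    have : (Nat.centralBinom (k+1) : ℝ)
        = 2 * (2 * k + 1) * (Nat.centralBinom k : ℝ) / ((k:ℝ) + 1) := by
      field_simp at h' ⊢; linarith [h']
    rw [this, ← ih]
    field_simp
    ring

/-- The even moments of the semicircle distribution are the Catalan numbers, and the odd
moments vanish. -/
theorem semicircle_moments (k : ℕ) :
    (∫ x in (-2 : ℝ)..2, x ^ (2 * k) * ((1 / (2 * π)) * Real.sqrt (4 - x ^ 2))) =
      (catalan k : ℝ) ∧
    (∫ x in (-2 : ℝ)..2, x ^ (2 * k + 1) * ((1 / (2 * π)) * Real.sqrt (4 - x ^ 2))) = 0 ∧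
    (catalan k : ℝ) = (1 / (k + 1 : ℝ)) * (Nat.choose (2 * k) k : ℝ) := by
  have hπ : (π : ℝ) ≠ 0 := Real.pi_ne_zero
  -- change of variables x = 2 cos θ for general exponent n
  have key : ∀ n : ℕ, (∫ x in (-2 : ℝ)..2, x ^ n * Real.sqrt (4 - x ^ 2)) =
      2 ^ (n + 2) * ∫ θ in (0:ℝ)..π, Real.sin θ ^ 2 * Real.cos θ ^ n := by
    intro n
    have hg : Continuous fun x : ℝ => x ^ n * Real.sqrt (4 - x ^ 2) := by
      exact (continuous_pow n).mul (Real.continuous_sqrt.comp (by continuity))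
    have hsub := intervalIntegral.integral_comp_smul_deriv
      (f := fun θ : ℝ => 2 * Real.cos θ) (f' := fun θ : ℝ => -2 * Real.sin θ)
      (g := fun x : ℝ => x ^ n * Real.sqrt (4 - x ^ 2)) (a := (0:ℝ)) (b := π)
      (fun x _ => by simpa [mul_comm] using (Real.hasDerivAt_cos x).const_mul 2)
      (by fun_prop) hg
    simp only [Real.cos_zero, Real.cos_pi, mul_one] at hsub
    have h2 : (2 : ℝ) * (-1) = -2 := by norm_num
    rw [h2] at hsub
    have hswap : (∫ x in (2:ℝ)..(-2), x ^ n * Real.sqrt (4 - x ^ 2))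
        = -∫ x in (-2:ℝ)..2, x ^ n * Real.sqrt (4 - x ^ 2) :=
      intervalIntegral.integral_symm _ _
    -- rewrite the θ-integrand
    have hcongr : (∫ θ in (0:ℝ)..π, (-2 * Real.sin θ) •
          ((fun x : ℝ => x ^ n * Real.sqrt (4 - x ^ 2)) ∘ (fun θ => 2 * Real.cos θ)) θ)
        = ∫ θ in (0:ℝ)..π, -(2 ^ (n + 2) * (Real.sin θ ^ 2 * Real.cos θ ^ n)) := by
      apply intervalIntegral.integral_congr
      intro θ hθ
      rw [Set.uIcc_of_le Real.pi_pos.le] at hθ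
      have hs : 0 ≤ Real.sin θ := Real.sin_nonneg_of_mem_Icc hθ
      have hsq : Real.sqrt (4 - (2 * Real.cos θ) ^ 2) = 2 * Real.sin θ := by
        have : 4 - (2 * Real.cos θ) ^ 2 = (2 * Real.sin θ) ^ 2 := by
          have := Real.sin_sq_add_cos_sq θ; nlinarith
        rw [this, Real.sqrt_sq (by positivity)]
      simp only [Function.comp, smul_eq_mul]
      rw [hsq, mul_pow]
      ring
    rw [hcongr, intervalIntegral.integral_neg] at hsub
    rw [intervalIntegral.integral_const_mul] at hsub
    rw [hswap] at hsub
    linarith [hsub]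
  -- the sin² cos^n integral splits
  have split : ∀ n : ℕ, (∫ θ in (0:ℝ)..π, Real.sin θ ^ 2 * Real.cos θ ^ n)
      = (∫ θ in (0:ℝ)..π, Real.cos θ ^ n) - ∫ θ in (0:ℝ)..π, Real.cos θ ^ (n + 2) := by
    intro n
    rw [← intervalIntegral.integral_sub (by apply Continuous.intervalIntegrable; fun_prop)
      (by apply Continuous.intervalIntegrable; fun_prop)]
    apply intervalIntegral.integral_congr
    intro θ _
    show Real.sin θ ^ 2 * Real.cos θ ^ n = Real.cos θ ^ n - Real.cos θ ^ (n + 2)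
    have hsc : Real.sin θ ^ 2 = 1 - Real.cos θ ^ 2 := by
      nlinarith [Real.sin_sq_add_cos_sq θ]
    rw [hsc, pow_add]
    ring
  refine ⟨?_, ?_, ?_⟩
  · -- even moments
    have e1 : (∫ x in (-2 : ℝ)..2, x ^ (2 * k) * ((1 / (2 * π)) * Real.sqrt (4 - x ^ 2)))
        = (1 / (2 * π)) * ∫ x in (-2 : ℝ)..2, x ^ (2 * k) * Real.sqrt (4 - x ^ 2) := by
      rw [← intervalIntegral.integral_const_mul]
      apply intervalIntegral.integral_congr
      intro x _; ring
    rw [e1, key (2 * k), split (2 * k)]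
    have h2 : 2 * k + 2 = 2 * (k + 1) := by ring
    rw [h2, integral_cos_pow_even' k, integral_cos_pow_even' (k + 1)]
    rw [Finset.prod_range_succ]
    have hP := prod_eq_centralBinom k
    have hc : ((k:ℝ) + 1) * (catalan k : ℝ) = (Nat.centralBinom k : ℝ) := by
      exact_mod_cast succ_mul_catalan_eq_centralBinom k
    set P : ℝ := ∏ i ∈ Finset.range k, (2 * (i : ℝ) + 1) / (2 * i + 2) with hPdef
    have hk1 : ((k:ℝ) + 1) ≠ 0 := by positivity
    have h4 : (2:ℝ) ^ (2 * (k + 1)) = 4 * 4 ^ k := by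
      rw [pow_mul]; norm_num [pow_succ]; ring
    rw [h4]
    have : π * P - π * (P * ((2 * (k:ℝ) + 1) / (2 * k + 2))) = π * P / (2 * k + 2) := by
      field_simp; ring
    rw [this]
    have h4P : (4:ℝ) ^ k * P = (Nat.centralBinom k : ℝ) := hP
    field_simp
    nlinarith [h4P, hc, Real.pi_pos]
  · -- odd moments vanish by oddness
    set f : ℝ → ℝ := fun x => x ^ (2 * k + 1) * ((1 / (2 * π)) * Real.sqrt (4 - x ^ 2)) with hf
    have h : (∫ x in (-2:ℝ)..2, f (-x)) = ∫ x in (-2:ℝ)..2, f x := by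
      have := intervalIntegral.integral_comp_neg (f := f) (a := (-2:ℝ)) (b := 2)
      simp only [neg_neg] at this; exact this
    have h2 : (∫ x in (-2:ℝ)..2, f (-x)) = -∫ x in (-2:ℝ)..2, f x := by
      rw [← intervalIntegral.integral_neg]
      apply intervalIntegral.integral_congr
      intro x _
      simp only [hf]
      have hp : (-x) ^ (2 * k + 1) = -(x ^ (2 * k + 1)) := by
        rw [neg_pow]; simp [pow_succ, pow_mul]
      rw [hp, neg_sq]; ring
    have h3 : (∫ x in (-2:ℝ)..2, f x) = 0 := by linarith
    exact h3
  · -- catalan formula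
    have hc : ((k:ℝ) + 1) * (catalan k : ℝ) = (Nat.centralBinom k : ℝ) := by
      exact_mod_cast succ_mul_catalan_eq_centralBinom k
    have : (Nat.centralBinom k : ℝ) = (Nat.choose (2 * k) k : ℝ) := by
      rw [Nat.centralBinom]
    have hk1 : ((k:ℝ) + 1) ≠ 0 := by positivity
    rw [← this]
    field_simp
    linarith [hc]
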